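/- Let F(x) and G(x) be formal power series satisfying -1 + G(x) = x/(1 - x - x·F(x)). Then for every n ≥ 2, H_n(-1+G) = -H^{(2)}_{n-2}(F). -/

import Mathlib

open PowerSeries

/-- The shifted Hankel determinant `H^{(k)}_n(F)`. -/
noncomputable def hankel {R : Type*} [CommRing R] (k n : ℕ) (F : PowerSeries R) : R :=
  Matrix.det (Matrix.of fun i j : Fin n => PowerSeries.coeff (R := R) (k + (i : ℕ) + (j : ℕ)) F)


private lemma aux_main {R : Type*} [CommRing R] (f g t : ℕ → R)
    (ht0 : t 0 = 1)
    (htf : ∀ s : ℕ, 2 ≤ s → t s = - f (s - 1))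
    (key : ∀ s : ℕ, ∑ l ∈ Finset.range (s+1), g l * t (s - l) = if s = 1 then 1 else 0)
    (m : ℕ) :
    Matrix.det (Matrix.of fun i j : Fin (2+m) => g ((i:ℕ) + j)) =
      - Matrix.det (Matrix.of fun i j : Fin m => f (2 + (i:ℕ) + j)) := by
  have hg0 : g 0 = 0 := by simpa [ht0] using key 0
  have hg1 : g 1 = 1 := by
    have h := key 1
    simp [Finset.sum_range_succ, hg0, ht0] at h
    exact h
  set A : Matrix (Fin (2+m)) (Fin (2+m)) R := Matrix.of fun i j => g ((i:ℕ)+j) with hA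
  set T : Matrix (Fin (2+m)) (Fin (2+m)) R :=
    Matrix.of fun i j => if (j:ℕ) ≤ (i:ℕ) then t ((i:ℕ) - (j:ℕ)) else 0 with hT
  set N : Matrix (Fin (2+m)) (Fin (2+m)) R :=
    Matrix.of fun i j => (if (i:ℕ) + (j:ℕ) = 1 then (1:R) else 0)
      - ∑ l ∈ Finset.range (j:ℕ), g l * t ((i:ℕ) + (j:ℕ) - l) with hN
  have hTA : T * A = N := by
    ext i j
    simp only [Matrix.mul_apply, hT, hN, hA, Matrix.of_apply]
    rw [Fin.sum_univ_eq_sum_range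
      (fun k => (if k ≤ (i:ℕ) then t ((i:ℕ) - k) else 0) * g (k + (j:ℕ)))]
    have hsub : Finset.range ((i:ℕ)+1) ⊆ Finset.range (2+m) :=
      Finset.range_subset_range.mpr (by omega)
    rw [← Finset.sum_subset hsub (by
      intro x hx1 hx2
      rw [Finset.mem_range] at hx1 hx2
      rw [if_neg (by omega), zero_mul])]
    have h1 : ∀ k ∈ Finset.range ((i:ℕ)+1),
        (if k ≤ (i:ℕ) then t ((i:ℕ) - k) else 0) * g (k + (j:ℕ))
          = g ((j:ℕ) + k) * t ((i:ℕ) + (j:ℕ) - ((j:ℕ) + k)) := by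
      intro k hk
      rw [Finset.mem_range] at hk
      rw [if_pos (by omega), mul_comm]
      congr 2
      · omega
      · omega
    rw [Finset.sum_congr rfl h1]
    have h2 := Finset.sum_Ico_eq_sum_range
      (f := fun l => g l * t ((i:ℕ) + (j:ℕ) - l)) (m := (j:ℕ)) (n := (i:ℕ)+(j:ℕ)+1)
    have h3 : (i:ℕ)+(j:ℕ)+1 - (j:ℕ) = (i:ℕ)+1 := by omega
    rw [h3] at h2
    rw [← h2, eq_sub_iff_add_eq, add_comm, Finset.range_eq_Ico,
      Finset.sum_Ico_consecutive _ (Nat.zero_le (j:ℕ)) (by omega : (j:ℕ) ≤ (i:ℕ)+(j:ℕ)+1),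
      ← Finset.range_eq_Ico]
    exact key ((i:ℕ)+(j:ℕ))
  have hdetT : T.det = 1 := by
    rw [Matrix.det_of_lowerTriangular T (by
      intro i j hij
      simp only [hT, Matrix.of_apply]
      have h' : (i:ℕ) < (j:ℕ) := Fin.lt_def.mp (OrderDual.toDual_lt_toDual.mp hij)
      rw [if_neg (by omega)])]
    simp [hT, ht0]
  have hdetAN : A.det = N.det := by
    rw [← hTA, Matrix.det_mul, hdetT, one_mul]
  set D : Matrix (Fin m) (Fin m) R :=
    Matrix.of fun i j => ∑ l ∈ Finset.range (2+(j:ℕ)), g l * f (3+(i:ℕ)+(j:ℕ)-l) with hD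
  set e : Fin 2 ⊕ Fin m ≃ Fin (2+m) := finSumFinEquiv with he
  set Bblk : Matrix (Fin 2) (Fin m) R :=
    Matrix.of fun i j => N (e (Sum.inl i)) (e (Sum.inr j)) with hBblk
  have hval1 : ∀ i : Fin 2, ((e (Sum.inl i) : Fin (2+m)) : ℕ) = (i : ℕ) := by
    intro i; simp [he, finSumFinEquiv]
  have hval2 : ∀ i : Fin m, ((e (Sum.inr i) : Fin (2+m)) : ℕ) = 2 + (i : ℕ) := by
    intro i; simp [he, finSumFinEquiv]
  have hblock : N.submatrix e e = Matrix.fromBlocks !![0,1;1,0] Bblk 0 D := by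
    ext i j
    cases i with
    | inl i =>
      cases j with
      | inl j =>
        fin_cases i <;> fin_cases j <;>
          simp [hN, hval1, hg0, Finset.sum_range_succ]
      | inr j => rfl
    | inr i =>
      cases j with
      | inl j =>
        fin_cases j <;>
          simp [hN, hval1, hval2, hg0, Finset.sum_range_succ] <;> omega
      | inr j =>
        simp only [Matrix.submatrix_apply, Matrix.fromBlocks_apply₂₂, hN, hD,
          Matrix.of_apply, hval1, hval2]
        rw [if_neg (by omega), zero_sub, ← Finset.sum_neg_distrib]
        apply Finset.sum_congr rfl
        intro l hl
        rw [Finset.mem_range] at hl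
        rw [htf (2+(i:ℕ)+(2+(j:ℕ))-l) (by omega)]
        ring_nf
        congr 2
        omega
  have hdetN : N.det = - D.det := by
    rw [← Matrix.det_submatrix_equiv_self e N, hblock, Matrix.det_fromBlocks_zero₂₁]
    norm_num [Matrix.det_fin_two]
  set Bf : Matrix (Fin m) (Fin m) R := Matrix.of fun i j => f (2+(i:ℕ)+(j:ℕ)) with hBf
  set L : Matrix (Fin m) (Fin m) R :=
    Matrix.of fun i j => if (i:ℕ) ≤ (j:ℕ) then g ((j:ℕ)+1-(i:ℕ)) else 0 with hL
  have hDBL : D = Bf * L := by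
    ext i j
    simp only [hD, hBf, hL, Matrix.mul_apply, Matrix.of_apply]
    rw [Fin.sum_univ_eq_sum_range
      (fun k => f (2+(i:ℕ)+k) * if k ≤ (j:ℕ) then g ((j:ℕ)+1-k) else 0)]
    have hsub : Finset.range ((j:ℕ)+1) ⊆ Finset.range m :=
      Finset.range_subset_range.mpr (by omega)
    rw [← Finset.sum_subset hsub (by
      intro x hx1 hx2
      rw [Finset.mem_range] at hx1 hx2
      rw [if_neg (by omega), mul_zero])]
    rw [← Finset.sum_range_reflect (fun l => g l * f (3+(i:ℕ)+(j:ℕ)-l)) (2+(j:ℕ))]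
    have : 2 + (j:ℕ) = ((j:ℕ)+1) + 1 := by omega
    rw [this, Finset.sum_range_succ]
    have hlast : g ((j:ℕ)+1+1-1-((j:ℕ)+1)) = g 0 := by congr 1; omega
    rw [hlast, hg0, zero_mul, add_zero]
    apply Finset.sum_congr rfl
    intro k hk
    rw [Finset.mem_range] at hk
    rw [if_pos (by omega), mul_comm]
    congr 1
    all_goals congr 1
    all_goals omega
  have hdetL : L.det = 1 := by
    rw [Matrix.det_of_upperTriangular (M := L) (by
      intro i j hij
      simp only [hL, Matrix.of_apply]
      rw [if_neg]
      exact fun h => absurd hij (by simp only [id] at *; omega))]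
    have : ∀ i : Fin m, L i i = 1 := by
      intro i
      simp only [hL, Matrix.of_apply, if_pos le_rfl]
      rw [show (i:ℕ)+1-(i:ℕ) = 1 by omega, hg1]
    simp [this]
  have hdetD : D.det = Bf.det := by
    rw [hDBL, Matrix.det_mul, hdetL, mul_one]
  rw [hdetAN, hdetN, hdetD]


theorem stmt6 {R : Type*} [CommRing R] (F G : PowerSeries R)
    (hG : (G - 1) * (1 - PowerSeries.X - PowerSeries.X * F) = PowerSeries.X) (n : ℕ) (hn : 2 ≤ n) :
    hankel 0 n (G - 1) = - hankel 2 (n - 2) F := by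
  obtain ⟨m, rfl⟩ : ∃ m, n = 2 + m := ⟨n - 2, by omega⟩
  have ht0 : (PowerSeries.coeff (R := R) 0) (1 - PowerSeries.X - PowerSeries.X * F) = 1 := by
    simp [map_sub, PowerSeries.coeff_zero_eq_constantCoeff, map_mul]
  have htf : ∀ s : ℕ, 2 ≤ s →
      (PowerSeries.coeff (R := R) s) (1 - PowerSeries.X - PowerSeries.X * F)
        = - (PowerSeries.coeff (R := R) (s-1)) F := by
    intro s hs
    obtain ⟨k, rfl⟩ : ∃ k, s = k + 1 + 1 := ⟨s - 2, by omega⟩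
    simp [map_sub, PowerSeries.coeff_one, PowerSeries.coeff_X,
      PowerSeries.coeff_succ_X_mul]
  have key : ∀ s : ℕ, ∑ l ∈ Finset.range (s+1),
      (PowerSeries.coeff (R := R) l) (G - 1) *
        (PowerSeries.coeff (R := R) (s-l)) (1 - PowerSeries.X - PowerSeries.X * F)
      = if s = 1 then 1 else 0 := by
    intro s
    have h := congrArg (PowerSeries.coeff (R := R) s) hG
    rw [PowerSeries.coeff_mul, Finset.Nat.sum_antidiagonal_eq_sum_range_succ_mk] at h
    simpa [PowerSeries.coeff_X] using h
  have H := aux_main (fun k => PowerSeries.coeff (R := R) k F)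
    (fun k => PowerSeries.coeff (R := R) k (G - 1))
    (fun k => PowerSeries.coeff (R := R) k (1 - PowerSeries.X - PowerSeries.X * F))
    ht0 htf key m
  have h2 : 2 + m - 2 = m := by omega
  rw [h2]
  simpa only [hankel, zero_add] using H
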